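/- Let S' ⊆ V be a current partial subset, R ⊆ V a set of remaining candidate points with S' ∩ R = ∅, and let k be an integer with 1 ≤ k ≤ |R|. If v ∈ R satisfies U_max(v) < U_min^k (the k-th largest minimum utility over R), then v belongs to no optimal set S*, i.e., no set S* maximizing f over all T with S' ⊆ T ⊆ S' ∪ R and |T| = |S'| + k contains v. -/

import Mathlib

open Finset

/-- The `k`-th largest element (1-indexed) of a multiset of reals. -/
noncomputable def kthLargest (m : Multiset ℝ) (k : ℕ) : ℝ :=
  (m.sort (· ≤ ·)).getD (Multiset.card m - k) 0

lemma kth_count (m : Multiset ℝ) (k : ℕ) (hk1 : 1 ≤ k) (hk2 : k ≤ Multiset.card m) :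
    k ≤ Multiset.card (m.filter (fun x => kthLargest m k ≤ x)) := by
  obtain ⟨K, hKdef⟩ : ∃ K, kthLargest m k = K := ⟨_, rfl⟩
  rw [hKdef]
  set l := m.sort (· ≤ ·) with hl
  have hsort : l.Pairwise (· ≤ ·) := m.pairwise_sort _
  have hlen : l.length = Multiset.card m := m.length_sort _
  have hlt : Multiset.card m - k < l.length := by omega
  have hK : K = l.get ⟨Multiset.card m - k, hlt⟩ := by
    simp [← hKdef, kthLargest, List.getD_eq_get, hlt, ← hl]
  set d := l.drop (Multiset.card m - k) with hd
  have hdlen : d.length = k := by simp [hd]; omega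
  have hdall : ∀ x ∈ d, K ≤ x := by
    intro x hx
    obtain ⟨i, hi⟩ := List.get_of_mem hx
    have : d.get i = l.get ⟨Multiset.card m - k + i.1, by have := i.2; simp [hd] at this ⊢; omega⟩ := by
      simp [hd, List.getElem_drop]
    rw [hK, ← hi, this]
    exact hsort.rel_get_of_le (by simp)
  have hsub : d.Sublist l := List.drop_sublist _ _
  have h1 : (d.filter (fun x => decide (K ≤ x))).length ≤
      (l.filter (fun x => decide (K ≤ x))).length :=
    (hsub.filter _).length_le
  rw [List.filter_eq_self.2 (by intro x hx; simpa using hdall x hx)] at h1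
  have hml : m = ↑l := (m.sort_eq _).symm
  rw [hml]
  simp only [Multiset.filter_coe, Multiset.coe_card]
  simpa [hdlen] using h1

/-- Shrink step correctness: if the maximum utility of `v ∈ R` is below the `k`-th largest
minimum utility over `R`, then `v` belongs to no optimal set. -/
theorem shrink_lemma {V : Type*} [Fintype V] [DecidableEq V]
    (α β : ℝ) (hα : 0 < α) (hβ : 0 ≤ β)
    (u : V → ℝ) (s : V → V → ℝ)
    (hsymm : ∀ v w, s v w = s w v) (hnn : ∀ v w, 0 ≤ s v w)
    (hdiag : ∀ v, s v v = 0)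
    (f : Finset V → ℝ)
    (hf : ∀ S : Finset V, f S = α * ∑ v ∈ S, u v - (β / 2) * ∑ v ∈ S, ∑ w ∈ S, s v w)
    (S' R : Finset V) (hdisj : Disjoint S' R)
    (k : ℕ) (hk1 : 1 ≤ k) (hk2 : k ≤ R.card)
    (Umin Umax : V → ℝ)
    (hUmin : ∀ v, Umin v = u v - (β / α) * ∑ w ∈ S' ∪ R, s v w)
    (hUmax : ∀ v, Umax v = u v - (β / α) * ∑ w ∈ S', s v w)
    (v : V) (hv : v ∈ R)
    (hshrink : Umax v < kthLargest (R.val.map Umin) k) :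
    ∀ Sstar : Finset V,
      S' ⊆ Sstar → Sstar ⊆ S' ∪ R → Sstar.card = S'.card + k →
      (∀ T : Finset V, S' ⊆ T → T ⊆ S' ∪ R → T.card = S'.card + k → f T ≤ f Sstar) →
      v ∉ Sstar := by
  intro Sstar hS1 hS2 hcard hopt hvS
  obtain ⟨K, hKdef⟩ : ∃ K, kthLargest (R.val.map Umin) k = K := ⟨_, rfl⟩
  rw [hKdef] at hshrink
  -- insert formula for f
  have hins : ∀ (A : Finset V) (x : V), x ∉ A →
      f (insert x A) = f A + α * u x - β * ∑ y ∈ A, s x y := by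
    intro A x hx
    rw [hf, hf, Finset.sum_insert hx, Finset.sum_insert hx]
    have h1 : ∑ w ∈ insert x A, s x w = ∑ w ∈ A, s x w := by
      rw [Finset.sum_insert hx, hdiag]; ring
    have h2 : ∑ a ∈ A, ∑ w ∈ insert x A, s a w
        = ∑ a ∈ A, (s a x + ∑ w ∈ A, s a w) :=
      Finset.sum_congr rfl (fun a _ => Finset.sum_insert hx)
    have h3 : ∑ a ∈ A, s a x = ∑ a ∈ A, s x a :=
      Finset.sum_congr rfl (fun a _ => hsymm a x)
    rw [h1, h2, Finset.sum_add_distrib, h3]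
    ring
  -- counting: at least k elements of R have Umin ≥ K
  set W := R.filter (fun w => K ≤ Umin w) with hW
  have hcount : k ≤ W.card := by
    have h0 := kth_count (R.val.map Umin) k hk1 (by simpa using hk2)
    rw [hKdef] at h0
    rw [← Multiset.countP_eq_card_filter, Multiset.countP_map] at h0
    simpa [hW, Finset.card_def, Finset.filter_val] using h0
  have hvS' : v ∉ S' := fun h => (Finset.disjoint_left.1 hdisj h) hv
  -- Umin v ≤ Umax v
  have hminmax : Umin v ≤ Umax v := by
    rw [hUmin, hUmax]
    have : ∑ w ∈ S', s v w ≤ ∑ w ∈ S' ∪ R, s v w :=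
      Finset.sum_le_sum_of_subset_of_nonneg Finset.subset_union_left
        (fun i _ _ => hnn v i)
    nlinarith [div_nonneg hβ hα.le]
  have hvW : v ∉ W := by
    simp only [hW, Finset.mem_filter, not_and]
    intro _
    linarith
  -- |Sstar ∩ R| = k
  have hSR : (Sstar ∩ R).card = k := by
    have heq : Sstar = S' ∪ (Sstar ∩ R) := by
      ext x
      simp only [Finset.mem_union, Finset.mem_inter]
      constructor
      · intro hx
        rcases Finset.mem_union.1 (hS2 hx) with h | h
        · exact Or.inl h
        · exact Or.inr ⟨hx, h⟩
      · rintro (h | ⟨h, _⟩)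
        · exact hS1 h
        · exact h
    have hd2 : Disjoint S' (Sstar ∩ R) := hdisj.mono_right Finset.inter_subset_right
    have := Finset.card_union_of_disjoint hd2
    rw [← heq] at this
    omega
  -- find w ∈ W \ Sstar
  have hvSR : v ∈ Sstar ∩ R := Finset.mem_inter.2 ⟨hvS, hv⟩
  obtain ⟨w, hwW, hwS⟩ : ∃ w ∈ W, w ∉ Sstar := by
    by_contra hcon
    push_neg at hcon
    have hWsub : W ⊆ (Sstar ∩ R).erase v := by
      intro x hx
      refine Finset.mem_erase.2 ⟨?_, Finset.mem_inter.2 ⟨hcon x hx, (Finset.mem_filter.1 hx).1⟩⟩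
      rintro rfl; exact hvW hx
    have := Finset.card_le_card hWsub
    rw [Finset.card_erase_of_mem hvSR, hSR] at this
    omega
  obtain ⟨hwR, hKw⟩ := Finset.mem_filter.1 hwW
  -- build swap set
  set A := Sstar.erase v with hA
  have hvA : v ∉ A := Finset.notMem_erase v Sstar
  have hwA : w ∉ A := fun h => hwS (Finset.erase_subset _ _ h)
  have hS'A : S' ⊆ A := by
    intro x hx
    exact Finset.mem_erase.2 ⟨fun h => hvS' (h ▸ hx), hS1 hx⟩
  have hASR : A ⊆ S' ∪ R := (Finset.erase_subset _ _).trans hS2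
  have hcardA : A.card + 1 = Sstar.card := by
    rw [hA, Finset.card_erase_of_mem hvS]
    omega
  have hle : f (insert w A) ≤ f Sstar := by
    refine hopt _ (hS'A.trans (Finset.subset_insert _ _)) ?_ ?_
    · exact Finset.insert_subset (Finset.mem_union_right _ hwR) hASR
    · rw [Finset.card_insert_of_notMem hwA]
      omega
  -- strict improvement
  have e1 : f Sstar = f A + α * u v - β * ∑ y ∈ A, s v y := by
    conv_lhs => rw [show Sstar = insert v A from (Finset.insert_erase hvS).symm]
    exact hins A v hvA
  have e2 : f (insert w A) = f A + α * u w - β * ∑ y ∈ A, s w y := hins A w hwA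
  have b1 : ∑ y ∈ A, s w y ≤ ∑ y ∈ S' ∪ R, s w y :=
    Finset.sum_le_sum_of_subset_of_nonneg hASR (fun i _ _ => hnn w i)
  have b2 : ∑ y ∈ S', s v y ≤ ∑ y ∈ A, s v y :=
    Finset.sum_le_sum_of_subset_of_nonneg hS'A (fun i _ _ => hnn v i)
  have hstrict : u v - (β / α) * ∑ y ∈ S', s v y
      < u w - (β / α) * ∑ y ∈ S' ∪ R, s w y := by
    rw [← hUmax, ← hUmin]
    exact lt_of_lt_of_le hshrink hKw
  have h5 := mul_lt_mul_of_pos_left hstrict hα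
  have hba : ∀ X : ℝ, α * (β / α * X) = β * X := by
    intro X; field_simp
  have h6 : α * (u v - β / α * ∑ y ∈ S', s v y)
      = α * u v - β * ∑ y ∈ S', s v y := by rw [mul_sub, hba]
  have h7 : α * (u w - β / α * ∑ y ∈ S' ∪ R, s w y)
      = α * u w - β * ∑ y ∈ S' ∪ R, s w y := by rw [mul_sub, hba]
  have b1' := mul_le_mul_of_nonneg_left b1 hβ
  have b2' := mul_le_mul_of_nonneg_left b2 hβ
  have : f Sstar < f (insert w A) := by
    rw [e1, e2]
    rw [h6, h7] at h5
    linarith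
  linarith
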